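/- arXiv:2209.01761 — 4 statements merged into one kernel-verified Lean document; each statement's English description precedes it below -/
import Mathlib

section
/- (Lower bound on information production, Theorem 1, Eq. (8)) For any input state ρ_in = Σ_{i=1}^r p_i |p_i⟩⟨p_i| and any quantum channel Φ, the total information production satisfies ΔS ≥ L_otm, i.e. S(Φ(ρ_in)) − S(ρ_in) ≥ −ln( Σ_{i=1}^r e^{−C(Φ(|p_i⟩⟨p_i|), ρ_out)} ), where ρ_out = Φ(ρ_in). -/
set_option linter.unusedSectionVars false
set_option maxHeartbeats 1000000


open scoped Kronecker BigOperators ComplexOrder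

namespace QCE

variable {ι : Type*} [Fintype ι] [DecidableEq ι]

/-- Apply a real function to a matrix via the spectral decomposition (functional calculus on
the eigenvalues); returns `0` if the matrix is not Hermitian. -/
noncomputable def matFun (A : Matrix ι ι ℂ) (f : ℝ → ℝ) : Matrix ι ι ℂ :=
  if h : A.IsHermitian then h.cfc f else 0

/-- Matrix logarithm taken on the support (eigenvalue `0` is sent to `0`,
since `Real.log 0 = 0`). -/
noncomputable def matLog (A : Matrix ι ι ℂ) : Matrix ι ι ℂ :=
  matFun A Real.log

/-- Quantum cross entropy `C(ρ₁, ρ₂) = -Tr[ρ₁ ln ρ₂]`, with the logarithm on the support. -/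
noncomputable def crossEnt (ρ₁ ρ₂ : Matrix ι ι ℂ) : ℝ :=
  -((ρ₁ * matLog ρ₂).trace.re)

/-- Von Neumann entropy `S(ρ) = -Tr[ρ ln ρ]`. -/
noncomputable def vnEntropy (ρ : Matrix ι ι ℂ) : ℝ :=
  crossEnt ρ ρ

/-- A density matrix: positive semidefinite with unit trace. -/
def IsDensityMatrix (ρ : Matrix ι ι ℂ) : Prop :=
  ρ.PosSemidef ∧ ρ.trace = 1

/-- The rank-one projector `|v⟩⟨v|`. -/
noncomputable def outer (v : ι → ℂ) : Matrix ι ι ℂ :=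
  Matrix.vecMulVec v (star v)

/-- An orthonormal family of vectors. -/
def OrthonormalFam {r : ℕ} (v : Fin r → ι → ℂ) : Prop :=
  ∀ i j, (∑ a, star (v i a) * v j a) = if i = j then (1 : ℂ) else 0

/-- The Choi matrix of a linear map on matrices. -/
noncomputable def choi {κ : Type*} [Fintype κ] [DecidableEq κ]
    (Φ : Matrix ι ι ℂ →ₗ[ℂ] Matrix κ κ ℂ) : Matrix (ι × κ) (ι × κ) ℂ :=
  ∑ i : ι, ∑ j : ι, (Matrix.single i j (1 : ℂ)) ⊗ₖ (Φ (Matrix.single i j 1))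

/-- A quantum channel: completely positive (positive semidefinite Choi matrix, by Choi's
theorem) and trace preserving. -/
def IsCPTP {κ : Type*} [Fintype κ] [DecidableEq κ]
    (Φ : Matrix ι ι ℂ →ₗ[ℂ] Matrix κ κ ℂ) : Prop :=
  (choi Φ).PosSemidef ∧ ∀ ρ : Matrix ι ι ℂ, (Φ ρ).trace = ρ.trace

/-- Partial trace over the second tensor factor. -/
noncomputable def ptraceB {dA dB : ℕ}
    (ρ : Matrix (Fin dA × Fin dB) (Fin dA × Fin dB) ℂ) : Matrix (Fin dA) (Fin dA) ℂ :=
  Matrix.of fun i j => ∑ k : Fin dB, ρ (i, k) (j, k)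

/-- Partial trace over the first tensor factor. -/
noncomputable def ptraceA {dA dB : ℕ}
    (ρ : Matrix (Fin dA × Fin dB) (Fin dA × Fin dB) ℂ) : Matrix (Fin dB) (Fin dB) ℂ :=
  Matrix.of fun i j => ∑ k : Fin dA, ρ (k, i) (k, j)


/-- Matrix square root via the spectral decomposition. -/
noncomputable def matSqrt (A : Matrix ι ι ℂ) : Matrix ι ι ℂ :=
  matFun A Real.sqrt

/-- Quantum fidelity `F[ρ,σ] = (Tr[√(√ρ σ √ρ)])²`. -/
noncomputable def fidelity (ρ σ : Matrix ι ι ℂ) : ℝ :=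
  ((matSqrt (matSqrt ρ * σ * matSqrt ρ)).trace.re) ^ 2



lemma outer_mul_outer {r : ℕ} {v : Fin r → ι → ℂ} (hv : OrthonormalFam v) (i j : Fin r) :
    outer (v i) * outer (v j) = if i = j then outer (v i) else 0 := by
  have key : ∀ a b, (outer (v i) * outer (v j)) a b
      = (∑ c, star (v i c) * v j c) * (v i a * star (v j b)) := by
    intro a b
    simp only [outer, Matrix.mul_apply, Matrix.vecMulVec_apply, Pi.star_apply, Finset.sum_mul]
    exact Finset.sum_congr rfl fun c _ => by ring
  ext a b
  rw [key, hv i j]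
  by_cases h : i = j
  · subst h; simp [outer, Matrix.vecMulVec_apply]
  · simp [h]

lemma trace_outer {r : ℕ} {v : Fin r → ι → ℂ} (hv : OrthonormalFam v) (i : Fin r) :
    (outer (v i)).trace = 1 := by
  have h := hv i i
  rw [if_pos rfl] at h
  rw [Matrix.trace, ← h]
  simp [Matrix.diag, outer, Matrix.vecMulVec_apply, mul_comm]

lemma outer_isHermitian (w : ι → ℂ) : (outer w).IsHermitian := by
  ext a b
  simp [outer, Matrix.conjTranspose_apply, Matrix.vecMulVec_apply, mul_comm]

lemma rho_isHermitian {r : ℕ} (p : Fin r → ℝ) (v : Fin r → ι → ℂ) :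
    (∑ i, (p i : ℂ) • outer (v i)).IsHermitian := by
  show Matrix.conjTranspose _ = _
  rw [Matrix.conjTranspose_sum]
  refine Finset.sum_congr rfl fun i _ => ?_
  rw [Matrix.conjTranspose_smul, outer_isHermitian (v i)]
  simp

lemma rho_pow {r : ℕ} {v : Fin r → ι → ℂ} (hv : OrthonormalFam v) (p : Fin r → ℝ) :
    ∀ k : ℕ, (∑ i, (p i : ℂ) • outer (v i)) ^ (k+1)
      = ∑ i, ((p i : ℂ)) ^ (k+1) • outer (v i)
  | 0 => by simp
  | (k+1) => by
    rw [pow_succ, rho_pow hv p k, Finset.sum_mul]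
    refine Finset.sum_congr rfl fun i _ => ?_
    rw [Finset.mul_sum]
    simp only [smul_mul_assoc, mul_smul_comm, outer_mul_outer hv, smul_ite, smul_zero, smul_smul]
    rw [Finset.sum_ite_eq Finset.univ i]
    simp [pow_succ, mul_comm]

lemma rho_pow_trace {r : ℕ} {v : Fin r → ι → ℂ} (hv : OrthonormalFam v) (p : Fin r → ℝ)
    (k : ℕ) : ((∑ i, (p i : ℂ) • outer (v i)) ^ (k+1)).trace = ∑ i, ((p i : ℂ)) ^ (k+1) := by
  rw [rho_pow hv p k, Matrix.trace_sum]
  refine Finset.sum_congr rfl fun i _ => ?_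
  rw [Matrix.trace_smul, trace_outer hv, smul_eq_mul, mul_one]

lemma conj_pow {U D : Matrix ι ι ℂ} (hU : star U * U = 1) :
    ∀ k : ℕ, (U * D * star U) ^ (k+1) = U * D ^ (k+1) * star U
  | 0 => by simp
  | (k+1) => by
    rw [pow_succ, conj_pow hU k]
    simp only [mul_assoc]
    rw [← mul_assoc (star U) U, hU, one_mul, ← mul_assoc (D^(k+1)) D (star U), ← pow_succ]

lemma trace_conj {U D : Matrix ι ι ℂ} (hU : star U * U = 1) :
    (U * D * star U).trace = D.trace := by
  rw [Matrix.trace_mul_cycle, hU, one_mul]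

lemma hermitian_pow_trace {A : Matrix ι ι ℂ} (hA : A.IsHermitian) (k : ℕ) :
    (A ^ (k+1)).trace = ∑ j, ((hA.eigenvalues j : ℂ)) ^ (k+1) := by
  have hU : star (hA.eigenvectorUnitary : Matrix ι ι ℂ) * (hA.eigenvectorUnitary : Matrix ι ι ℂ) = 1 :=
    Unitary.star_mul_self_of_mem (SetLike.coe_mem _)
  have hA' := hA.spectral_theorem
  set U : Matrix ι ι ℂ := (hA.eigenvectorUnitary : Matrix ι ι ℂ) with hUdef
  set d : ι → ℝ := hA.eigenvalues with hd
  rw [hA', Unitary.conjStarAlgAut_apply, ← hUdef, conj_pow hU, trace_conj hU, Matrix.diagonal_pow, Matrix.trace_diagonal]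
  simp [Function.comp]

lemma hermitian_trace_mul_cfc {A : Matrix ι ι ℂ} (hA : A.IsHermitian) (f : ℝ → ℝ) :
    (A * hA.cfc f).trace = ∑ j, (((hA.eigenvalues j * f (hA.eigenvalues j) : ℝ)) : ℂ) := by
  have hU : star (hA.eigenvectorUnitary : Matrix ι ι ℂ) * (hA.eigenvectorUnitary : Matrix ι ι ℂ) = 1 :=
    Unitary.star_mul_self_of_mem (SetLike.coe_mem _)
  have hA' := hA.spectral_theorem
  have hc : hA.cfc f = (hA.eigenvectorUnitary : Matrix ι ι ℂ)
      * Matrix.diagonal (RCLike.ofReal ∘ f ∘ hA.eigenvalues)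
      * star (hA.eigenvectorUnitary : Matrix ι ι ℂ) := rfl
  set U : Matrix ι ι ℂ := (hA.eigenvectorUnitary : Matrix ι ι ℂ) with hUdef
  set d : ι → ℝ := hA.eigenvalues with hd
  rw [hc, hA', Unitary.conjStarAlgAut_apply, ← hUdef]
  have key : (U * Matrix.diagonal (RCLike.ofReal ∘ hA.eigenvalues) * star U)
      * (U * Matrix.diagonal (RCLike.ofReal ∘ f ∘ hA.eigenvalues) * star U)
      = U * (Matrix.diagonal (RCLike.ofReal ∘ hA.eigenvalues)
          * Matrix.diagonal (RCLike.ofReal ∘ f ∘ hA.eigenvalues)) * star U := by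
    simp only [mul_assoc]
    rw [← mul_assoc (star U) U, hU, one_mul]
  rw [key, trace_conj hU, Matrix.diagonal_mul_diagonal, Matrix.trace_diagonal]
  simp [Function.comp, hd]

lemma sum_smul_outer_mul {r : ℕ} {v : Fin r → ι → ℂ} (hv : OrthonormalFam v) (q c : Fin r → ℂ) :
    (∑ i, q i • outer (v i)) * (∑ i, c i • outer (v i)) = ∑ i, (q i * c i) • outer (v i) := by
  rw [Finset.sum_mul]
  refine Finset.sum_congr rfl fun i _ => ?_
  rw [Finset.mul_sum]
  simp only [smul_mul_assoc, mul_smul_comm, outer_mul_outer hv, smul_ite, smul_zero, smul_smul]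
  rw [Finset.sum_ite_eq Finset.univ i]
  simp [mul_comm]

lemma expand_mul {r : ℕ} {v : Fin r → ι → ℂ} (hv : OrthonormalFam v) (q c : Fin r → ℂ)
    (a b : ℂ) :
    (a • (1 : Matrix ι ι ℂ) + ∑ i, q i • outer (v i))
      * (b • (1 : Matrix ι ι ℂ) + ∑ i, c i • outer (v i))
    = (a * b) • (1 : Matrix ι ι ℂ)
        + ∑ i, (a * c i + q i * b + q i * c i) • outer (v i) := by
  have t1 : (a • (1 : Matrix ι ι ℂ)) * (b • (1 : Matrix ι ι ℂ)) = (a*b) • 1 := by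
    simp [smul_smul, mul_comm]
  have t2 : (a • (1 : Matrix ι ι ℂ)) * (∑ i, c i • outer (v i))
      = ∑ i, (a * c i) • outer (v i) := by
    rw [Finset.mul_sum]
    exact Finset.sum_congr rfl fun i _ => by
      rw [smul_mul_assoc, mul_smul_comm, one_mul, smul_smul]
  have t3 : (∑ i, q i • outer (v i)) * (b • (1 : Matrix ι ι ℂ))
      = ∑ i, (q i * b) • outer (v i) := by
    rw [Finset.sum_mul]
    exact Finset.sum_congr rfl fun i _ => by
      rw [smul_mul_assoc, mul_smul_comm, mul_one, smul_smul, mul_comm]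
  rw [add_mul, mul_add, mul_add, t1, t2, t3, sum_smul_outer_mul hv]
  simp only [add_smul, Finset.sum_add_distrib]
  abel

lemma eigenvalues_location {r : ℕ} {v : Fin r → ι → ℂ} (hv : OrthonormalFam v) (p : Fin r → ℝ)
    (hA : (∑ i, (p i : ℂ) • outer (v i)).IsHermitian) (j : ι) :
    hA.eigenvalues j = 0 ∨ ∃ i, hA.eigenvalues j = p i := by
  by_contra hcon
  push_neg at hcon
  obtain ⟨hne0, hnep⟩ := hcon
  set μ : ℝ := hA.eigenvalues j with hμ
  have hmem := hA.eigenvalues_mem_spectrum_real j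
  rw [spectrum.mem_iff] at hmem
  apply hmem
  have hμ0 : (μ : ℂ) ≠ 0 := by exact_mod_cast hne0
  have hμp : ∀ i, (μ : ℂ) - (p i : ℂ) ≠ 0 := fun i => by
    intro h
    exact hnep i (by exact_mod_cast sub_eq_zero.mp h)
  have halg : algebraMap ℝ (Matrix ι ι ℂ) μ = (μ : ℂ) • 1 := by
    rw [Algebra.algebraMap_eq_smul_one]
    ext a b
    simp [Matrix.smul_apply, Complex.real_smul]
  set c : Fin r → ℂ := fun i => (p i : ℂ) * (μ:ℂ)⁻¹ * ((μ:ℂ) - p i)⁻¹ with hc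
  set B : Matrix ι ι ℂ := (μ:ℂ)⁻¹ • 1 + ∑ i, c i • outer (v i) with hB
  have hrw : algebraMap ℝ (Matrix ι ι ℂ) μ - ∑ i, (p i : ℂ) • outer (v i)
      = (μ:ℂ) • 1 + ∑ i, (-(p i : ℂ)) • outer (v i) := by
    rw [halg, sub_eq_add_neg, ← Finset.sum_neg_distrib]
    simp [neg_smul]
  have key : ∀ i, ((μ:ℂ) - p i) * c i = (p i : ℂ) * (μ:ℂ)⁻¹ := by
    intro i
    rw [hc]
    field_simp
    rw [mul_div_assoc, div_self (hμp i)]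
    ring
  have hcoeff : ∀ i, (μ:ℂ) * c i + (-(p i:ℂ)) * (μ:ℂ)⁻¹ + (-(p i:ℂ)) * c i = 0 := fun i => by
    linear_combination key i
  have hcoeff' : ∀ i, (μ:ℂ)⁻¹ * (-(p i:ℂ)) + c i * (μ:ℂ) + c i * (-(p i:ℂ)) = 0 := fun i => by
    linear_combination key i
  have h1 : (algebraMap ℝ (Matrix ι ι ℂ) μ - ∑ i, (p i : ℂ) • outer (v i)) * B = 1 := by
    rw [hrw, hB, expand_mul hv]
    rw [mul_inv_cancel₀ hμ0]
    have : ∀ i ∈ Finset.univ, ((μ:ℂ) * c i + (-(p i:ℂ)) * (μ:ℂ)⁻¹ + (-(p i:ℂ)) * c i)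
        • outer (v i) = 0 := fun i _ => by rw [hcoeff i, zero_smul]
    rw [Finset.sum_congr rfl this]
    simp
  have h2 : B * (algebraMap ℝ (Matrix ι ι ℂ) μ - ∑ i, (p i : ℂ) • outer (v i)) = 1 := by
    rw [hrw, hB, expand_mul hv]
    rw [inv_mul_cancel₀ hμ0]
    have : ∀ i ∈ Finset.univ, ((μ:ℂ)⁻¹ * (-(p i:ℂ)) + c i * (μ:ℂ) + c i * (-(p i:ℂ)))
        • outer (v i) = 0 := fun i _ => by rw [hcoeff' i, zero_smul]
    rw [Finset.sum_congr rfl this]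
    simp
  exact ⟨⟨_, B, h1, h2⟩, rfl⟩

lemma poly_sum_eq {κ₁ κ₂ : Type*} [Fintype κ₁] [Fintype κ₂] (lam : κ₁ → ℝ) (pp : κ₂ → ℝ)
    (hmom : ∀ k : ℕ, ∑ j, lam j ^ (k+1) = ∑ i, pp i ^ (k+1))
    (q : Polynomial ℝ) (hq : q.coeff 0 = 0) (N : ℕ) (hN : q.natDegree < N) :
    ∑ j, q.eval (lam j) = ∑ i, q.eval (pp i) := by
  have he : ∀ x : ℝ, q.eval x = ∑ k ∈ Finset.range N, q.coeff k * x ^ k := fun x =>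
    Polynomial.eval_eq_sum_range' hN x
  simp only [he]
  rw [Finset.sum_comm, Finset.sum_comm (t := Finset.range N)]
  refine Finset.sum_congr rfl fun k _ => ?_
  match k with
  | 0 => simp [hq]
  | (k+1) =>
    simp only [← Finset.mul_sum]
    rw [hmom k]

lemma eigen_moments {r : ℕ} {v : Fin r → ι → ℂ} (hv : OrthonormalFam v) (p : Fin r → ℝ)
    (hA : (∑ i, (p i : ℂ) • outer (v i)).IsHermitian) (k : ℕ) :
    ∑ j, (hA.eigenvalues j) ^ (k+1) = ∑ i, (p i) ^ (k+1) := by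
  have h := (hermitian_pow_trace hA k).symm.trans (rho_pow_trace hv p k)
  exact_mod_cast h

lemma vnEntropy_rho {r : ℕ} {v : Fin r → ι → ℂ} (hv : OrthonormalFam v) (p : Fin r → ℝ) :
    vnEntropy (∑ i, (p i : ℂ) • outer (v i)) = -∑ i, p i * Real.log (p i) := by
  have hA : (∑ i, (p i : ℂ) • outer (v i)).IsHermitian := rho_isHermitian p v
  rw [vnEntropy, crossEnt, matLog, matFun, dif_pos hA, hermitian_trace_mul_cfc hA Real.log]
  have hcast : (∑ j, (((hA.eigenvalues j * Real.log (hA.eigenvalues j) : ℝ)) : ℂ))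
      = ((∑ j, hA.eigenvalues j * Real.log (hA.eigenvalues j) : ℝ) : ℂ) := by
    push_cast; rfl
  rw [hcast, Complex.ofReal_re, neg_inj]
  -- interpolation
  set s : Finset ℝ := insert 0 (Finset.image p Finset.univ) with hs
  set g : ℝ → ℝ := fun x => x * Real.log x with hg
  set q : Polynomial ℝ := Lagrange.interpolate s id g with hqdef
  have hnode : ∀ x ∈ s, q.eval x = g x := by
    intro x hx
    exact Lagrange.eval_interpolate_at_node g (Set.injOn_id _) hx
  have h0 : q.eval 0 = 0 := by
    rw [hnode 0 (Finset.mem_insert_self _ _), hg]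
    simp
  have hcoeff0 : q.coeff 0 = 0 := by
    rw [Polynomial.coeff_zero_eq_eval_zero, h0]
  have hpts : ∀ j, hA.eigenvalues j * Real.log (hA.eigenvalues j) = q.eval (hA.eigenvalues j) := by
    intro j
    rcases eigenvalues_location hv p hA j with h | ⟨i, h⟩
    · rw [h, h0]; simp
    · rw [h, hnode (p i) (Finset.mem_insert_of_mem (Finset.mem_image_of_mem p
        (Finset.mem_univ i)))]
  have hpts' : ∀ i, p i * Real.log (p i) = q.eval (p i) := fun i =>
    (hnode (p i) (Finset.mem_insert_of_mem (Finset.mem_image_of_mem p (Finset.mem_univ i)))).symm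
  simp only [hpts, hpts']
  exact poly_sum_eq hA.eigenvalues p (eigen_moments hv p hA) q hcoeff0 (q.natDegree + 1)
    (Nat.lt_succ_self _)

lemma gibbs {r : ℕ} (p C : Fin r → ℝ) (hp : ∀ i, 0 < p i) (hp1 : ∑ i, p i = 1) :
    (∑ i, p i * C i) + ∑ i, p i * Real.log (p i)
      ≥ -Real.log (∑ i, Real.exp (-C i)) := by
  have hr : Nonempty (Fin r) := by
    by_contra h
    rw [not_nonempty_iff] at h
    rw [Finset.univ_eq_empty, Finset.sum_empty] at hp1
    exact zero_ne_one hp1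
  set Z := ∑ i, Real.exp (-C i) with hZ
  have hZpos : 0 < Z := Finset.sum_pos (fun i _ => Real.exp_pos _) Finset.univ_nonempty
  have key : ∀ i, p i - Real.exp (-C i) / Z ≤ p i * (C i + Real.log (p i) + Real.log Z) := by
    intro i
    have hx : 0 < Real.exp (C i) * p i * Z := mul_pos (mul_pos (Real.exp_pos _) (hp i)) hZpos
    have hlog : Real.log (Real.exp (C i) * p i * Z)
        = C i + Real.log (p i) + Real.log Z := by
      rw [Real.log_mul (ne_of_gt (mul_pos (Real.exp_pos _) (hp i))) (ne_of_gt hZpos),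
        Real.log_mul (ne_of_gt (Real.exp_pos _)) (ne_of_gt (hp i)), Real.log_exp]
    have hineq : 1 - (Real.exp (C i) * p i * Z)⁻¹ ≤ Real.log (Real.exp (C i) * p i * Z) := by
      have h2 := Real.log_le_sub_one_of_pos (inv_pos.mpr hx)
      rw [Real.log_inv] at h2
      linarith
    have heq : p i - Real.exp (-C i) / Z = p i * (1 - (Real.exp (C i) * p i * Z)⁻¹) := by
      rw [Real.exp_neg]
      field_simp
      rw [mul_sub, mul_one_div_cancel (hp i).ne']; ring
    rw [heq, ← hlog]
    exact mul_le_mul_of_nonneg_left hineq (le_of_lt (hp i))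
  have hsum := Finset.sum_le_sum (fun i (_ : i ∈ Finset.univ) => key i)
  have hrhs : ∑ i, (p i - Real.exp (-C i) / Z) = 0 := by
    rw [Finset.sum_sub_distrib, hp1, ← Finset.sum_div, ← hZ, div_self (ne_of_gt hZpos)]
    ring
  have hlhs : ∑ i, (p i * (C i + Real.log (p i) + Real.log Z))
      = (∑ i, p i * C i) + (∑ i, p i * Real.log (p i)) + Real.log Z := by
    simp only [mul_add]
    rw [Finset.sum_add_distrib, Finset.sum_add_distrib, ← Finset.sum_mul, hp1, one_mul]
  rw [hrhs, hlhs] at hsum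
  linarith

lemma crossEnt_sum {κ : Type*} [Fintype κ] [DecidableEq κ] {r : ℕ} (p : Fin r → ℝ)
    (M : Fin r → Matrix κ κ ℂ) (σ : Matrix κ κ ℂ) :
    crossEnt (∑ i, (p i : ℂ) • M i) σ = ∑ i, p i * crossEnt (M i) σ := by
  simp only [crossEnt, Finset.sum_mul, smul_mul_assoc, Matrix.trace_sum, Matrix.trace_smul]
  rw [Complex.re_sum, ← Finset.sum_neg_distrib]
  refine Finset.sum_congr rfl fun i _ => ?_
  simp [smul_eq_mul, Complex.mul_re, mul_neg]


/-- **Theorem 1, Eq. (8)** (Lower bound on information production).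
`ΔS = S(Φ(ρin)) - S(ρin) ≥ L_otm = -ln(∑ i, e^{-C(Φ(|pᵢ⟩⟨pᵢ|), ρout)})`. -/
theorem information_production_lower_bound
    {n m r : ℕ}
    (Φ : Matrix (Fin n) (Fin n) ℂ →ₗ[ℂ] Matrix (Fin m) (Fin m) ℂ) (hΦ : IsCPTP Φ)
    (p : Fin r → ℝ) (hp : ∀ i, 0 < p i) (hp1 : ∑ i, p i = 1)
    (v : Fin r → Fin n → ℂ) (hv : OrthonormalFam v)
    (ρin : Matrix (Fin n) (Fin n) ℂ) (hρin : ρin = ∑ i, (p i : ℂ) • outer (v i))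
    (ρout : Matrix (Fin m) (Fin m) ℂ) (hρout : ρout = Φ ρin) :
    vnEntropy ρout - vnEntropy ρin
      ≥ -Real.log (∑ i, Real.exp (-(crossEnt (Φ (outer (v i))) ρout))) := by
  have hρo : ρout = ∑ i, (p i : ℂ) • Φ (outer (v i)) := by
    rw [hρout, hρin, map_sum]
    simp only [map_smul]
  have hA : vnEntropy ρout = ∑ i, p i * crossEnt (Φ (outer (v i))) ρout := by
    rw [vnEntropy]
    nth_rewrite 1 [hρo]
    rw [crossEnt_sum]
  have hB : vnEntropy ρin = -∑ i, p i * Real.log (p i) := by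
    rw [hρin]
    exact vnEntropy_rho hv p
  rw [hA, hB]
  have hg : (∑ i, p i * crossEnt (Φ (outer (v i))) ρout) + ∑ i, p i * Real.log (p i)
      ≥ -Real.log (∑ i, Real.exp (-(crossEnt (Φ (outer (v i))) ρout))) :=
    gibbs p (fun i => crossEnt (Φ (outer (v i))) ρout) hp hp1
  linarith


end QCE
end

section
/- (Cross-entropy overlap bound, Eq. (15)) For density matrices ρ₁, ρ₂ on a finite-dimensional complex Hilbert space with supp(ρ₁) ⊆ supp(ρ₂), the quantum cross entropy is lower bounded by the negative logarithm of the state overlap: C(ρ₁, ρ₂) ≥ −ln Tr[ρ₁ ρ₂]. -/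
open scoped Kronecker BigOperators ComplexOrder

namespace QCE

variable {ι : Type*} [Fintype ι] [DecidableEq ι]

/-- **Eq. (15)** (Cross-entropy overlap bound). For density matrices with
`supp(ρ₁) ⊆ supp(ρ₂)` (equivalently, `ker ρ₂ ⊆ ker ρ₁`),
`C(ρ₁, ρ₂) ≥ -ln Tr[ρ₁ ρ₂]`. -/
theorem cross_entropy_overlap_bound
    {n : ℕ} (ρ₁ ρ₂ : Matrix (Fin n) (Fin n) ℂ)
    (h₁ : IsDensityMatrix ρ₁) (h₂ : IsDensityMatrix ρ₂)
    (hsupp : ∀ x : Fin n → ℂ, ρ₂.mulVec x = 0 → ρ₁.mulVec x = 0) :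
    crossEnt ρ₁ ρ₂ ≥ -Real.log ((ρ₁ * ρ₂).trace.re) := by
  classical
  obtain ⟨hρ₁, htr₁⟩ := h₁
  obtain ⟨hρ₂, htr₂⟩ := h₂
  have hH : ρ₂.IsHermitian := hρ₂.1
  set U : Matrix (Fin n) (Fin n) ℂ := (hH.eigenvectorUnitary : Matrix (Fin n) (Fin n) ℂ) with hU
  set lam : Fin n → ℝ := hH.eigenvalues with hlam
  set M : Matrix (Fin n) (Fin n) ℂ := star U * ρ₁ * U with hMdef
  set p : Fin n → ℝ := fun j => (M j j).re with hp
  -- the diagonal entries of M via eigenvectors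
  have hMjj : ∀ j, M j j = dotProduct (star ⇑(hH.eigenvectorBasis j))
      (ρ₁.mulVec ⇑(hH.eigenvectorBasis j)) := by
    intro j
    simp only [hMdef, Matrix.mul_apply, Matrix.star_apply, dotProduct,
      Matrix.mulVec, dotProduct, hU, Matrix.IsHermitian.eigenvectorUnitary_apply,
      Pi.star_apply, RCLike.star_def, Finset.mul_sum, Finset.sum_mul]
    rw [Finset.sum_comm]
    refine Finset.sum_congr rfl fun a _ => Finset.sum_congr rfl fun b _ => ?_
    ring
  -- p is nonnegative
  have hp_nonneg : ∀ j, 0 ≤ p j := by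
    intro j
    have := hρ₁.re_dotProduct_nonneg ⇑(hH.eigenvectorBasis j)
    simpa [hp, hMjj j] using this
  -- if the eigenvalue vanishes, so does p
  have hp_zero : ∀ j, lam j = 0 → p j = 0 := by
    intro j hj
    have hev : ρ₂.mulVec ⇑(hH.eigenvectorBasis j) = 0 := by
      rw [hH.mulVec_eigenvectorBasis, ← hlam, hj]
      simp
    have h1 : ρ₁.mulVec ⇑(hH.eigenvectorBasis j) = 0 := hsupp _ hev
    simp [hp, hMjj j, h1]
  -- eigenvalues are nonnegative
  have hlam_nonneg : ∀ j, 0 ≤ lam j := fun j => hρ₂.eigenvalues_nonneg j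
  -- trace of ρ₁ * (U * D * U⋆) for a real diagonal D
  have key : ∀ d : Fin n → ℝ,
      (ρ₁ * (U * Matrix.diagonal (fun j => (d j : ℂ)) * star U)).trace
        = ∑ j, M j j * (d j : ℂ) := by
    intro d
    have h1 : ρ₁ * (U * Matrix.diagonal (fun j => (d j : ℂ)) * star U)
        = ρ₁ * (U * Matrix.diagonal (fun j => (d j : ℂ))) * star U := by
      noncomm_ring
    rw [h1, Matrix.trace_mul_cycle]
    have h2 : star U * ρ₁ * (U * Matrix.diagonal (fun j => (d j : ℂ)))
        = M * Matrix.diagonal (fun j => (d j : ℂ)) := by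
      rw [hMdef]; noncomm_ring
    rw [h2]
    simp [Matrix.trace, Matrix.diag, Matrix.mul_diagonal]
  -- sum of p is 1
  have hMtrace : M.trace = 1 := by
    rw [hMdef, Matrix.trace_mul_cycle]
    have : U * star U = 1 := Matrix.mem_unitaryGroup_iff.mp hH.eigenvectorUnitary.2
    rw [this, one_mul, htr₁]
  have hp_sum : ∑ j, p j = 1 := by
    have h1 : (∑ j, M j j) = 1 := by
      rw [← hMtrace]; simp [Matrix.trace, Matrix.diag]
    have h2 := congrArg Complex.re h1
    simpa [hp, Complex.re_sum] using h2
  -- cross entropy in terms of p and lam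
  have hdiag_eq : ∀ f : ℝ → ℝ,
      (Matrix.diagonal (RCLike.ofReal ∘ f ∘ hH.eigenvalues) : Matrix (Fin n) (Fin n) ℂ)
        = Matrix.diagonal (fun j => ((f (lam j) : ℝ) : ℂ)) := by
    intro f; rfl
  have hCE : crossEnt ρ₁ ρ₂ = -∑ j, p j * Real.log (lam j) := by
    have hml : matLog ρ₂ = U * Matrix.diagonal (fun j => ((Real.log (lam j) : ℝ) : ℂ)) * star U := by
      rw [matLog, matFun, dif_pos hH, Matrix.IsHermitian.cfc, ← hdiag_eq, Unitary.conjStarAlgAut_apply]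
    unfold crossEnt
    rw [hml, key]
    rw [Complex.re_sum]
    congr 1
    refine Finset.sum_congr rfl fun j _ => ?_
    simp [hp, Complex.mul_re]
  -- overlap in terms of p and lam
  have hOv : (ρ₁ * ρ₂).trace.re = ∑ j, p j * lam j := by
    have hspec : ρ₂ = U * Matrix.diagonal (fun j => ((lam j : ℝ) : ℂ)) * star U := by
      conv_lhs => rw [hH.spectral_theorem]
      rfl
    rw [hspec, key, Complex.re_sum]
    refine Finset.sum_congr rfl fun j _ => ?_
    simp [hp, Complex.mul_re]
  rw [hCE, hOv]
  -- now a purely real Jensen inequality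
  have hmain : ∑ j, p j * Real.log (lam j) ≤ Real.log (∑ j, p j * lam j) := by
    set t : Finset (Fin n) := Finset.univ.filter (fun j => p j ≠ 0) with ht
    have hpt : ∀ j ∈ t, 0 < p j := by
      intro j hj
      rw [ht, Finset.mem_filter] at hj
      exact lt_of_le_of_ne (hp_nonneg j) (Ne.symm hj.2)
    have hlt : ∀ j ∈ t, lam j ∈ Set.Ioi (0 : ℝ) := by
      intro j hj
      refine lt_of_le_of_ne (hlam_nonneg j) fun h => ?_
      exact (hpt j hj).ne' (hp_zero j h.symm)
    have hsum_t : ∑ j ∈ t, p j = 1 := by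
      rw [← hp_sum, ht]
      exact Finset.sum_filter_ne_zero _
    have hjensen := (strictConcaveOn_log_Ioi.concaveOn).le_map_sum
      (fun j hj => (hpt j hj).le) hsum_t hlt
    simp only [smul_eq_mul] at hjensen
    have e1 : ∑ j, p j * Real.log (lam j) = ∑ j ∈ t, p j * Real.log (lam j) := by
      rw [ht]
      exact (Finset.sum_filter_of_ne (fun j _ h => by
        intro hpj; exact h (by rw [hpj]; ring))).symm
    have e2 : ∑ j, p j * lam j = ∑ j ∈ t, p j * lam j := by
      rw [ht]
      exact (Finset.sum_filter_of_ne (fun j _ h => by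
        intro hpj; exact h (by rw [hpj]; ring))).symm
    rw [e1, e2]
    exact hjensen
  linarith

end QCE
end

section
/- (Eq. (16)) For any input state ρ_in = Σ_{i=1}^r p_i |p_i⟩⟨p_i| and any quantum channel Φ, with Π_in = Σ_{i=1}^r |p_i⟩⟨p_i| the projector onto the support of ρ_in, one has Σ_{i=1}^r e^{−C(Φ(|p_i⟩⟨p_i|), ρ_out)} ≤ Tr[ Φ(Π_in) ρ_out ], where ρ_out = Φ(ρ_in). -/
open scoped Kronecker BigOperators ComplexOrder

namespace QCE

variable {ι : Type*} [Fintype ι] [DecidableEq ι]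

section Aux

open Matrix

private lemma map_entry {κ : Type*} [Fintype κ] [DecidableEq κ]
    (Φ : Matrix ι ι ℂ →ₗ[ℂ] Matrix κ κ ℂ) (M : Matrix ι ι ℂ) (k l : κ) :
    Φ M k l = ∑ a : ι, ∑ b : ι, M a b * Φ (single a b 1) k l := by
  conv_lhs => rw [matrix_eq_sum_single M, map_sum]
  simp only [Matrix.sum_apply]
  refine Finset.sum_congr rfl fun a _ => ?_
  rw [map_sum]
  simp only [Matrix.sum_apply]
  refine Finset.sum_congr rfl fun b _ => ?_
  have h : single a b (M a b) = M a b • single a b (1:ℂ) := by simp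
  rw [h, _root_.map_smul, Matrix.smul_apply, smul_eq_mul]

private lemma choi_entry {κ : Type*} [Fintype κ] [DecidableEq κ]
    (Φ : Matrix ι ι ℂ →ₗ[ℂ] Matrix κ κ ℂ) (a b : ι) (k l : κ) :
    choi Φ (a, k) (b, l) = Φ (Matrix.single a b 1) k l := by
  simp only [choi, Matrix.sum_apply, Matrix.kroneckerMap_apply, Matrix.single, of_apply,
    ite_mul, one_mul, zero_mul, ite_and]
  simp [Finset.sum_ite_eq, Finset.sum_ite_eq']

private lemma posSemidef_map_outer {κ : Type*} [Fintype κ] [DecidableEq κ]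
    (Φ : Matrix ι ι ℂ →ₗ[ℂ] Matrix κ κ ℂ)
    (hΦ : (choi Φ).PosSemidef) (u : ι → ℂ) : (Φ (outer u)).PosSemidef := by
  obtain ⟨B, hB⟩ : ∃ B : Matrix (ι × κ) (ι × κ) ℂ, choi Φ = Bᴴ * B := by
    open scoped MatrixOrder Matrix.Norms.L2Operator in
    exact CStarAlgebra.nonneg_iff_eq_star_mul_self.mp hΦ.nonneg
  set G : Matrix (ι × κ) κ ℂ :=
    Matrix.of (fun s l => ∑ b, star (u b) * B s (b, l)) with hG
  have key : Φ (outer u) = Gᴴ * G := by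
    ext k l
    rw [map_entry]
    calc (∑ a : ι, ∑ b : ι, outer u a b * Φ (single a b 1) k l)
        = ∑ a : ι, ∑ b : ι, ∑ s : ι × κ,
            (u a * star (B s (a, k))) * (star (u b) * B s (b, l)) := by
          refine Finset.sum_congr rfl fun a _ => Finset.sum_congr rfl fun b _ => ?_
          rw [← choi_entry, hB, Matrix.mul_apply, Finset.mul_sum]
          refine Finset.sum_congr rfl fun s _ => ?_
          simp only [Matrix.conjTranspose_apply, outer, Matrix.vecMulVec_apply, Pi.star_apply]
          ring
      _ = ∑ a : ι, ∑ s : ι × κ, ∑ b : ι,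
            (u a * star (B s (a, k))) * (star (u b) * B s (b, l)) :=
          Finset.sum_congr rfl fun a _ => Finset.sum_comm
      _ = ∑ s : ι × κ, ∑ a : ι, ∑ b : ι,
            (u a * star (B s (a, k))) * (star (u b) * B s (b, l)) :=
          Finset.sum_comm
      _ = (Gᴴ * G) k l := by
          rw [Matrix.mul_apply]
          refine Finset.sum_congr rfl fun s _ => ?_
          rw [Matrix.conjTranspose_apply, hG]
          simp only [Matrix.of_apply, star_sum, star_mul', star_star]
          rw [Finset.sum_mul_sum]
  rw [key]
  exact Matrix.posSemidef_conjTranspose_mul_self G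

private lemma posSemidef_sum_smul {κ : Type*} [Fintype κ] [DecidableEq κ] {β : Type*}
    (s : Finset β) (c : β → ℝ) (M : β → Matrix κ κ ℂ)
    (hc : ∀ b ∈ s, 0 ≤ c b) (hM : ∀ b ∈ s, (M b).PosSemidef) :
    (∑ b ∈ s, (c b : ℂ) • M b).PosSemidef := by
  classical
  induction s using Finset.induction_on with
  | empty => simpa using Matrix.PosSemidef.zero
  | insert _ _ hb ih =>
    rename_i a t
    rw [Finset.sum_insert hb]
    have h1 : ((c a : ℂ) • M a).PosSemidef := by
      refine Matrix.PosSemidef.of_dotProduct_mulVec_nonneg ?_ ?_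
      · unfold Matrix.IsHermitian
        rw [Matrix.conjTranspose_smul, (hM a (Finset.mem_insert_self a t)).1.eq]
        norm_num
      · intro x
        rw [Matrix.smul_mulVec, dotProduct_smul, smul_eq_mul]
        exact mul_nonneg (by exact_mod_cast hc a (Finset.mem_insert_self a t))
          ((hM a (Finset.mem_insert_self a t)).dotProduct_mulVec_nonneg x)
    have h2 := ih (fun b hb => hc b (Finset.mem_insert_of_mem hb))
      (fun b hb => hM b (Finset.mem_insert_of_mem hb))
    refine Matrix.PosSemidef.of_dotProduct_mulVec_nonneg ?_ ?_
    · unfold Matrix.IsHermitian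
      rw [Matrix.conjTranspose_add, h1.1.eq, h2.1.eq]
    · intro x
      rw [Matrix.add_mulVec, dotProduct_add]
      exact add_nonneg (h1.dotProduct_mulVec_nonneg x) (h2.dotProduct_mulVec_nonneg x)

private lemma trace_mul_unitary_diag {k : ℕ} (A U : Matrix (Fin k) (Fin k) ℂ) (d : Fin k → ℂ) :
    (A * (U * Matrix.diagonal d * Uᴴ)).trace = ∑ j, (Uᴴ * A * U) j j * d j := by
  have h1 : A * (U * Matrix.diagonal d * Uᴴ) = (A * U * Matrix.diagonal d) * Uᴴ := by
    simp only [Matrix.mul_assoc]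
  rw [h1, Matrix.trace_mul_comm]
  have h2 : Uᴴ * (A * U * Matrix.diagonal d) = (Uᴴ * A * U) * Matrix.diagonal d := by
    simp only [Matrix.mul_assoc]
  rw [h2, Matrix.trace]
  exact Finset.sum_congr rfl fun j _ => by rw [Matrix.diag_apply, Matrix.mul_diagonal]

private lemma psd_diag_eq {k : ℕ} {N : Matrix (Fin k) (Fin k) ℂ} (hN : N.PosSemidef) (j : Fin k) :
    0 ≤ (N j j).re ∧ N j j = ((N j j).re : ℂ) := by
  have h := hN.dotProduct_mulVec_nonneg (Pi.single j 1)
  have he : star (Pi.single j 1 : Fin k → ℂ) ⬝ᵥ N *ᵥ Pi.single j 1 = N j j := by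
    simp [Matrix.mulVec_single, dotProduct, Pi.single_apply]
  rw [he] at h
  obtain ⟨h1, h2⟩ := Complex.nonneg_iff.mp h
  exact ⟨h1, Complex.ext rfl (by simpa using h2.symm)⟩

private lemma exp_sum_log_le {k : ℕ} (q lam : Fin k → ℝ)
    (hq : ∀ j, 0 ≤ q j) (hq1 : ∑ j, q j = 1) (hlam : ∀ j, 0 ≤ lam j)
    (hsupp : ∀ j, lam j = 0 → q j = 0) :
    Real.exp (∑ j, q j * Real.log (lam j)) ≤ ∑ j, q j * lam j := by
  have h := convexOn_exp.map_sum_le (t := Finset.univ) (w := q)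
      (p := fun j => Real.log (lam j)) (fun j _ => hq j) hq1 (fun j _ => Set.mem_univ _)
  simp only [smul_eq_mul] at h
  refine h.trans (le_of_eq (Finset.sum_congr rfl fun j _ => ?_))
  by_cases hj : lam j = 0
  · simp [hsupp j hj]
  · rw [Real.exp_log (lt_of_le_of_ne (hlam j) (Ne.symm hj))]

end Aux

open Matrix

/-- **Eq. (16)**. With `Π_in = ∑ i, |pᵢ⟩⟨pᵢ|` the projector onto the support of `ρin`,
`∑ i, e^{-C(Φ(|pᵢ⟩⟨pᵢ|), ρout)} ≤ Tr[Φ(Π_in) ρout]`. -/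
theorem exp_cross_entropy_sum_le_overlap
    {n m r : ℕ}
    (Φ : Matrix (Fin n) (Fin n) ℂ →ₗ[ℂ] Matrix (Fin m) (Fin m) ℂ) (hΦ : IsCPTP Φ)
    (p : Fin r → ℝ) (hp : ∀ i, 0 < p i) (hp1 : ∑ i, p i = 1)
    (v : Fin r → Fin n → ℂ) (hv : OrthonormalFam v)
    (ρin : Matrix (Fin n) (Fin n) ℂ) (hρin : ρin = ∑ i, (p i : ℂ) • outer (v i))
    (ρout : Matrix (Fin m) (Fin m) ℂ) (hρout : ρout = Φ ρin) :
    ∑ i, Real.exp (-(crossEnt (Φ (outer (v i))) ρout))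
      ≤ ((Φ (∑ i, outer (v i)) * ρout).trace).re := by
  classical
  have hρPSD : ∀ i, (Φ (outer (v i))).PosSemidef := fun i => posSemidef_map_outer Φ hΦ.1 (v i)
  have hsum : ρout = ∑ i : Fin r, (p i : ℂ) • Φ (outer (v i)) := by
    rw [hρout, hρin, map_sum]
    exact Finset.sum_congr rfl fun i _ => by rw [_root_.map_smul]
  have hσ : ρout.PosSemidef := by
    rw [hsum]
    exact posSemidef_sum_smul Finset.univ p _ (fun i _ => (hp i).le) (fun i _ => hρPSD i)
  have hH : ρout.IsHermitian := hσ.1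
  set U : Matrix (Fin m) (Fin m) ℂ :=
    (hH.eigenvectorUnitary : Matrix (Fin m) (Fin m) ℂ) with hUdef
  set lam : Fin m → ℝ := hH.eigenvalues with hlamdef
  have hlam0 : ∀ j, 0 ≤ lam j := fun j => hσ.eigenvalues_nonneg j
  set q : Fin r → Fin m → ℝ := fun i j => ((Uᴴ * Φ (outer (v i)) * U) j j).re with hqdef
  have hNPSD : ∀ i, (Uᴴ * Φ (outer (v i)) * U).PosSemidef :=
    fun i => (hρPSD i).conjTranspose_mul_mul_same U
  have hq0 : ∀ i j, 0 ≤ q i j := fun i j => (psd_diag_eq (hNPSD i) j).1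
  have hNdiag : ∀ i j, (Uᴴ * Φ (outer (v i)) * U) j j = ((q i j : ℝ) : ℂ) :=
    fun i j => (psd_diag_eq (hNPSD i) j).2
  have hstar : star U = Uᴴ := rfl
  have hdiag : Uᴴ * ρout * U = Matrix.diagonal (Complex.ofReal ∘ lam) := by
    rw [← hstar]
    have := hH.conjStarAlgAut_star_eigenvectorUnitary
    rw [Unitary.conjStarAlgAut_star_apply] at this
    exact this
  have hspec : ρout = U * Matrix.diagonal (Complex.ofReal ∘ lam) * Uᴴ := by
    rw [← hstar]
    have := hH.spectral_theorem
    rw [Unitary.conjStarAlgAut_apply] at this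
    exact this
  have hUU : U * Uᴴ = 1 := by
    rw [← hstar]
    exact Unitary.coe_mul_star_self hH.eigenvectorUnitary
  -- trace of Tr[ρ_i ρout]
  have htr : ∀ i, ((Φ (outer (v i)) * ρout).trace).re = ∑ j, q i j * lam j := by
    intro i
    conv_lhs => rw [hspec]
    rw [trace_mul_unitary_diag, Complex.re_sum]
    refine Finset.sum_congr rfl fun j _ => ?_
    rw [hNdiag]
    simp [← Complex.ofReal_mul]
  -- matrix logarithm of ρout
  have hlog : matLog ρout = U * Matrix.diagonal (Complex.ofReal ∘ (Real.log ∘ lam)) * Uᴴ := by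
    unfold matLog matFun
    rw [dif_pos hH]
    rfl
  have hce : ∀ i, -(crossEnt (Φ (outer (v i))) ρout) = ∑ j, q i j * Real.log (lam j) := by
    intro i
    rw [crossEnt, neg_neg, hlog, trace_mul_unitary_diag, Complex.re_sum]
    refine Finset.sum_congr rfl fun j _ => ?_
    rw [hNdiag]
    simp [← Complex.ofReal_mul]
  -- trace normalization
  have htrace1 : ∀ i, ∑ j, q i j = 1 := by
    intro i
    have h1 : (Uᴴ * Φ (outer (v i)) * U).trace = (Φ (outer (v i))).trace := by
      rw [Matrix.trace_mul_comm (Uᴴ * Φ (outer (v i))) U, ← Matrix.mul_assoc, hUU, one_mul]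
    have h2 : (Φ (outer (v i))).trace = 1 := by
      rw [hΦ.2]
      have hvi := hv i i
      rw [if_pos rfl] at hvi
      rw [outer, Matrix.trace, ← hvi]
      refine Finset.sum_congr rfl fun a _ => ?_
      simp [Matrix.vecMulVec_apply, mul_comm]
    have h3 : ∑ j, q i j = ((Uᴴ * Φ (outer (v i)) * U).trace).re := by
      rw [Matrix.trace, Complex.re_sum]
      rfl
    rw [h3, h1, h2, Complex.one_re]
  -- support condition
  have hsupp : ∀ i j, lam j = 0 → q i j = 0 := by
    intro i j hj
    have hMps : (ρout - (p i : ℂ) • Φ (outer (v i))).PosSemidef := by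
      rw [hsum, ← Finset.add_sum_erase _ _ (Finset.mem_univ i), add_sub_cancel_left]
      exact posSemidef_sum_smul _ p _ (fun b _ => (hp b).le) (fun b _ => hρPSD b)
    have hnn := (psd_diag_eq (hMps.conjTranspose_mul_mul_same U) j).1
    have hentry : (Uᴴ * (ρout - (p i : ℂ) • Φ (outer (v i))) * U) j j
        = ((lam j - p i * q i j : ℝ) : ℂ) := by
      rw [Matrix.mul_sub, Matrix.sub_mul, Matrix.sub_apply, hdiag]
      rw [Matrix.mul_smul, Matrix.smul_mul, Matrix.smul_apply, hNdiag]
      simp only [Matrix.diagonal_apply_eq, Function.comp_apply, smul_eq_mul]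
      push_cast
      ring
    rw [hentry, Complex.ofReal_re] at hnn
    rw [hj, zero_sub, neg_nonneg] at hnn
    have h4 : q i j ≤ 0 := by nlinarith [hp i]
    exact le_antisymm h4 (hq0 i j)
  -- combine
  have hmain : ∀ i, Real.exp (-(crossEnt (Φ (outer (v i))) ρout)) ≤ ∑ j, q i j * lam j := by
    intro i
    rw [hce i]
    exact exp_sum_log_le _ _ (hq0 i) (htrace1 i) hlam0 (fun j hj => hsupp i j hj)
  calc ∑ i, Real.exp (-(crossEnt (Φ (outer (v i))) ρout))
      ≤ ∑ i, ∑ j, q i j * lam j := Finset.sum_le_sum fun i _ => hmain i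
    _ = ((Φ (∑ i, outer (v i)) * ρout).trace).re := by
        rw [map_sum, Finset.sum_mul, Matrix.trace_sum, Complex.re_sum]
        exact (Finset.sum_congr rfl fun i _ => (htr i).symm)


end QCE
end

section
/- (Eq. (23): cross entropy through the quantum autoencoder channel) In the quantum autoencoder setup, for each i, C(Φ(|p_i⟩⟨p_i|), ρ_out) = S(ρ_B) + C(ρ_A^{(i)}, ρ_A), where ρ_out = Φ(ρ_in), ρ_A = Tr_B[U ρ_in U†] and ρ_A^{(i)} = Tr_B[U |p_i⟩⟨p_i| U†]. -/
open scoped Kronecker BigOperators ComplexOrder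

namespace QCE

variable {ι : Type*} [Fintype ι] [DecidableEq ι]

set_option linter.unusedSectionVars false
set_option maxHeartbeats 1000000

open Matrix Polynomial

lemma conj_diag_mul (W : Matrix ι ι ℂ) (hW2 : Wᴴ * W = 1) (g h : ι → ℂ) :
    (W * diagonal g * Wᴴ) * (W * diagonal h * Wᴴ)
      = W * diagonal (fun i => g i * h i) * Wᴴ := by
  simp only [Matrix.mul_assoc]
  rw [← Matrix.mul_assoc Wᴴ W, hW2, Matrix.one_mul,
    ← Matrix.mul_assoc (diagonal g), diagonal_mul_diagonal]

lemma conj_diag_aeval (W : Matrix ι ι ℂ) (hW1 : W * Wᴴ = 1) (hW2 : Wᴴ * W = 1)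
    (e : ι → ℝ) (p : Polynomial ℝ) :
    W * Matrix.diagonal (fun i => ((p.eval (e i) : ℝ) : ℂ)) * Wᴴ
      = Polynomial.aeval (W * Matrix.diagonal (fun i => ((e i : ℝ) : ℂ)) * Wᴴ) p := by
  induction p using Polynomial.induction_on with
  | C a =>
      have hd : Matrix.diagonal (fun _ : ι => ((a : ℝ) : ℂ)) = (a : ℂ) • (1 : Matrix ι ι ℂ) := by
        ext i j
        by_cases h : i = j <;> simp [Matrix.diagonal_apply, Matrix.one_apply, h]
      simp only [Polynomial.eval_C, Polynomial.aeval_C, hd]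
      rw [Matrix.mul_smul, Matrix.smul_mul, Matrix.mul_one, hW1,
        Algebra.algebraMap_eq_smul_one,
        show ((a : ℂ) • (1 : Matrix ι ι ℂ)) = a • (1 : Matrix ι ι ℂ) from
        algebraMap_smul ℂ a (1 : Matrix ι ι ℂ)]
  | add p q hp hq =>
      have hd : (fun i => (((p + q).eval (e i) : ℝ) : ℂ))
          = fun i => ((p.eval (e i) : ℝ) : ℂ) + ((q.eval (e i) : ℝ) : ℂ) := by
        funext i; push_cast [Polynomial.eval_add]; ring
      rw [hd, ← Matrix.diagonal_add, Matrix.mul_add, Matrix.add_mul, hp, hq, map_add]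
  | monomial n a ih =>
      have hd : (fun i => (((C a * X ^ (n + 1)).eval (e i) : ℝ) : ℂ))
          = fun i => (((C a * X ^ n).eval (e i) : ℝ) : ℂ) * ((e i : ℝ) : ℂ) := by
        funext i; push_cast [Polynomial.eval_mul, Polynomial.eval_pow, Polynomial.eval_C,
          Polynomial.eval_X, pow_succ]; ring
      rw [hd, ← conj_diag_mul W hW2, ih, show (C a * X ^ (n + 1)) = (C a * X ^ n) * X by ring,
        _root_.map_mul (Polynomial.aeval _) (C a * X ^ n) X, Polynomial.aeval_X]

lemma matFun_decomp {A : Matrix ι ι ℂ} (hA : A.IsHermitian)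
    (W : Matrix ι ι ℂ) (hW1 : W * Wᴴ = 1) (hW2 : Wᴴ * W = 1) (e : ι → ℝ)
    (hAe : A = W * Matrix.diagonal (fun i => ((e i : ℝ) : ℂ)) * Wᴴ) (f : ℝ → ℝ) :
    matFun A f = W * Matrix.diagonal (fun i => ((f (e i) : ℝ) : ℂ)) * Wᴴ := by
  classical
  set S : Finset ℝ := Finset.image hA.eigenvalues Finset.univ ∪ Finset.image e Finset.univ with hS
  set p : Polynomial ℝ := Lagrange.interpolate S id f with hp
  have hpS : ∀ x ∈ S, p.eval x = f x := by
    intro x hx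
    exact Lagrange.eval_interpolate_at_node f (Set.injOn_id _) hx
  have hV1 : (hA.eigenvectorUnitary : Matrix ι ι ℂ) * (hA.eigenvectorUnitary : Matrix ι ι ℂ)ᴴ = 1 := by
    rw [← Matrix.star_eq_conjTranspose]
    exact Unitary.mul_star_self_of_mem hA.eigenvectorUnitary.2
  have hV2 : (hA.eigenvectorUnitary : Matrix ι ι ℂ)ᴴ * (hA.eigenvectorUnitary : Matrix ι ι ℂ) = 1 := by
    rw [← Matrix.star_eq_conjTranspose]
    exact Unitary.star_mul_self_of_mem hA.eigenvectorUnitary.2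
  have hspec : A = (hA.eigenvectorUnitary : Matrix ι ι ℂ)
      * Matrix.diagonal (fun i => ((hA.eigenvalues i : ℝ) : ℂ))
      * (hA.eigenvectorUnitary : Matrix ι ι ℂ)ᴴ := by
    rw [← Matrix.star_eq_conjTranspose]
    exact hA.spectral_theorem
  have key : ∀ (Wl : Matrix ι ι ℂ), Wl * Wlᴴ = 1 → Wlᴴ * Wl = 1 → ∀ el : ι → ℝ,
      (∀ i, el i ∈ S) → A = Wl * Matrix.diagonal (fun i => ((el i : ℝ) : ℂ)) * Wlᴴ →
      Wl * Matrix.diagonal (fun i => ((f (el i) : ℝ) : ℂ)) * Wlᴴ = Polynomial.aeval A p := by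
    intro Wl h1 h2 el hel hdec
    have he : (fun i => ((f (el i) : ℝ) : ℂ)) = fun i => ((p.eval (el i) : ℝ) : ℂ) := by
      funext i; rw [hpS _ (hel i)]
    rw [he, conj_diag_aeval Wl h1 h2, ← hdec]
  have h1 := key _ hV1 hV2 hA.eigenvalues
    (fun i => Finset.mem_union_left _ (Finset.mem_image_of_mem _ (Finset.mem_univ i))) hspec
  have h2 := key W hW1 hW2 e
    (fun i => Finset.mem_union_right _ (Finset.mem_image_of_mem _ (Finset.mem_univ i))) hAe
  rw [matFun, dif_pos hA, Matrix.IsHermitian.cfc]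
  rw [← Matrix.star_eq_conjTranspose] at h1
  rw [show (RCLike.ofReal ∘ f ∘ hA.eigenvalues : ι → ℂ) = fun i => ((f (hA.eigenvalues i) : ℝ) : ℂ) from rfl]
  rw [Unitary.conjStarAlgAut_apply, h1, h2]

lemma outer_posSemidef (v : ι → ℂ) : (outer v).PosSemidef := by
  refine Matrix.PosSemidef.of_dotProduct_mulVec_nonneg ?_ ?_
  · ext i j
    simp [outer, Matrix.vecMulVec_apply, Matrix.conjTranspose_apply, mul_comm]
  · intro x
    have hz : star x ⬝ᵥ (outer v *ᵥ x) = star (star v ⬝ᵥ x) * (star v ⬝ᵥ x) := by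
      simp only [outer, dotProduct, Matrix.mulVec, Matrix.vecMulVec_apply, Pi.star_apply,
        star_sum, star_mul', star_star, dotProduct]
      rw [Finset.sum_mul_sum]
      simp only [Finset.mul_sum]
      congr 1; funext i; congr 1; funext j; ring
    rw [hz]
    exact star_mul_self_nonneg _

lemma ptraceB_posSemidef {dA dB : ℕ} {ρ : Matrix (Fin dA × Fin dB) (Fin dA × Fin dB) ℂ}
    (hρ : ρ.PosSemidef) : (ptraceB ρ).PosSemidef := by
  refine Matrix.PosSemidef.of_dotProduct_mulVec_nonneg ?_ ?_
  · ext i j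
    have h := fun a b => congrFun (congrFun hρ.1 a) b
    simp only [Matrix.conjTranspose_apply] at h
    simp only [ptraceB, Matrix.conjTranspose_apply, Matrix.of_apply, star_sum]
    exact Finset.sum_congr rfl fun k _ => h (i, k) (j, k)
  · intro x
    set y : Fin dB → (Fin dA × Fin dB) → ℂ :=
      fun k q => if q.2 = k then x q.1 else 0 with hy
    have hk : ∀ k : Fin dB, star (y k) ⬝ᵥ (ρ *ᵥ y k)
        = ∑ a, star (x a) * ∑ b, ρ (a, k) (b, k) * x b := by
      intro k
      simp only [hy, dotProduct, Matrix.mulVec, Fintype.sum_prod_type, Pi.star_apply, dotProduct]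
      simp only [apply_ite (star : ℂ → ℂ), star_zero, ite_mul, zero_mul, mul_ite, mul_zero,
        Finset.sum_ite_eq', Finset.mem_univ, if_true]
    have hsum : star x ⬝ᵥ (ptraceB ρ *ᵥ x)
        = ∑ k : Fin dB, ∑ a, star (x a) * ∑ b, ρ (a, k) (b, k) * x b := by
      simp only [dotProduct, Matrix.mulVec, ptraceB, Matrix.of_apply, Pi.star_apply,
        Finset.sum_mul, Finset.mul_sum]
      have h1 : ∀ a : Fin dA, ∑ b : Fin dA, ∑ k : Fin dB,
          star (x a) * (ρ (a, k) (b, k) * x b)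
          = ∑ k : Fin dB, ∑ b : Fin dA, star (x a) * (ρ (a, k) (b, k) * x b) :=
        fun a => Finset.sum_comm
      simp_rw [h1]
      exact Finset.sum_comm
    rw [hsum]
    refine Finset.sum_nonneg fun k _ => ?_
    rw [← hk k]
    exact hρ.dotProduct_mulVec_nonneg _

lemma diag_nonneg' {M : Matrix ι ι ℂ} (hM : M.PosSemidef) (i : ι) : 0 ≤ M i i := by
  have h := hM.dotProduct_mulVec_nonneg (Pi.single i 1)
  simpa [dotProduct, Matrix.mulVec, Pi.single_apply] using h

lemma trace_mul_conj_diag (M W : Matrix ι ι ℂ) (ℓ : ι → ℂ) :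
    (M * (W * Matrix.diagonal ℓ * Wᴴ)).trace = ∑ i, (Wᴴ * M * W) i i * ℓ i := by
  rw [show M * (W * Matrix.diagonal ℓ * Wᴴ) = (M * W) * Matrix.diagonal ℓ * Wᴴ by
    simp [Matrix.mul_assoc], Matrix.trace_mul_cycle]
  rw [show Wᴴ * (M * W) = Wᴴ * M * W from (Matrix.mul_assoc _ _ _).symm]
  simp only [Matrix.trace, Matrix.diag, Matrix.mul_apply, Matrix.diagonal_apply, mul_ite,
    mul_zero, Finset.sum_ite_eq', Finset.mem_univ, if_true]

lemma trace_conj_s7 (W M : Matrix ι ι ℂ) (hW1 : W * Wᴴ = 1) : (Wᴴ * M * W).trace = M.trace := by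
  rw [Matrix.trace_mul_cycle, hW1, Matrix.one_mul]

lemma trace_conj' (W M : Matrix ι ι ℂ) (hW2 : Wᴴ * W = 1) : (W * M * Wᴴ).trace = M.trace := by
  rw [Matrix.trace_mul_cycle, hW2, Matrix.one_mul]

lemma kron_conjT {m n : Type*} [Fintype m] [Fintype n]
    (A : Matrix m m ℂ) (B : Matrix n n ℂ) : (A ⊗ₖ B)ᴴ = Aᴴ ⊗ₖ Bᴴ := by
  ext q q'
  simp [Matrix.conjTranspose_apply, Matrix.kroneckerMap_apply]

lemma ptraceB_sum_smul {dA dB r : ℕ} (c : Fin r → ℂ)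
    (N : Fin r → Matrix (Fin dA × Fin dB) (Fin dA × Fin dB) ℂ) :
    ptraceB (∑ k, c k • N k) = ∑ k, c k • ptraceB (N k) := by
  ext i j
  simp only [ptraceB, Matrix.of_apply, Matrix.sum_apply, Matrix.smul_apply, smul_eq_mul,
    Finset.mul_sum]
  rw [Finset.sum_comm]

lemma posSemidef_sum_smul_s7 {r : ℕ} (c : Fin r → ℝ) (hc : ∀ k, 0 ≤ c k)
    (N : Fin r → Matrix ι ι ℂ) (hN : ∀ k, (N k).PosSemidef) :
    (∑ k, (c k : ℂ) • N k).PosSemidef := by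
  refine Matrix.PosSemidef.of_dotProduct_mulVec_nonneg ?_ ?_
  · show (∑ k, (c k : ℂ) • N k)ᴴ = _
    rw [Matrix.conjTranspose_sum]
    refine Finset.sum_congr rfl fun k _ => ?_
    rw [Matrix.conjTranspose_smul, (hN k).1.eq]
    congr 1
    simp [Complex.star_def, Complex.conj_ofReal]
  · intro x
    have hlin : star x ⬝ᵥ ((∑ k, (c k : ℂ) • N k) *ᵥ x)
        = ∑ k, (c k : ℂ) * (star x ⬝ᵥ (N k *ᵥ x)) := by
      simp only [dotProduct, Matrix.mulVec, Matrix.sum_apply, Matrix.smul_apply, dotProduct,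
        smul_eq_mul, Finset.mul_sum, Finset.sum_mul]
      rw [show (∑ i : ι, ∑ j : ι, ∑ k : Fin r, star x i * ((c k : ℂ) * N k i j * x j))
          = ∑ i : ι, ∑ k : Fin r, ∑ j : ι, star x i * ((c k : ℂ) * N k i j * x j) from
        Finset.sum_congr rfl fun i _ => Finset.sum_comm]
      rw [Finset.sum_comm]
      refine Finset.sum_congr rfl fun k _ => Finset.sum_congr rfl fun i _ =>
        Finset.sum_congr rfl fun j _ => by ring
    rw [hlin]
    exact Finset.sum_nonneg fun k _ =>
      mul_nonneg (Complex.zero_le_real.mpr (hc k)) ((hN k).dotProduct_mulVec_nonneg x)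

lemma conj_herm {ι : Type*} [Fintype ι] [DecidableEq ι] (W D : Matrix ι ι ℂ) (hD : Dᴴ = D) :
    (W * D * Wᴴ)ᴴ = W * D * Wᴴ := by
  rw [Matrix.conjTranspose_mul, Matrix.conjTranspose_mul, Matrix.conjTranspose_conjTranspose, hD]
  simp only [Matrix.mul_assoc]

lemma trace_ptraceB {dA dB : ℕ} (M : Matrix (Fin dA × Fin dB) (Fin dA × Fin dB) ℂ) :
    (ptraceB M).trace = M.trace := by
  simp [ptraceB, Matrix.trace, Matrix.diag, Fintype.sum_prod_type]

/-- **Eq. (23)** (Cross entropy through the quantum-autoencoder channel). For each `i`,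
`C(Φ(|pᵢ⟩⟨pᵢ|), ρout) = S(ρ_B) + C(ρ_A⁽ⁱ⁾, ρ_A)`. -/
theorem qae_cross_entropy_decomposition
    {dA dB r : ℕ}
    (U : Matrix (Fin dA × Fin dB) (Fin dA × Fin dB) ℂ)
    (hU : U * U.conjTranspose = 1 ∧ U.conjTranspose * U = 1)
    (ρB : Matrix (Fin dB) (Fin dB) ℂ) (hρB : IsDensityMatrix ρB)
    (p : Fin r → ℝ) (hp : ∀ i, 0 < p i) (hp1 : ∑ i, p i = 1)
    (v : Fin r → (Fin dA × Fin dB) → ℂ) (hv : OrthonormalFam v)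
    (ρin : Matrix (Fin dA × Fin dB) (Fin dA × Fin dB) ℂ)
    (hρin : ρin = ∑ i, (p i : ℂ) • outer (v i))
    (ρA : Matrix (Fin dA) (Fin dA) ℂ) (hρA : ρA = ptraceB (U * ρin * U.conjTranspose))
    (ρAi : Fin r → Matrix (Fin dA) (Fin dA) ℂ)
    (hρAi : ∀ i, ρAi i = ptraceB (U * outer (v i) * U.conjTranspose))
    (ρout : Matrix (Fin dA × Fin dB) (Fin dA × Fin dB) ℂ)
    (hρout : ρout = U.conjTranspose * (ρA ⊗ₖ ρB) * U)
    (Φi : Fin r → Matrix (Fin dA × Fin dB) (Fin dA × Fin dB) ℂ)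
    (hΦi : ∀ i, Φi i = U.conjTranspose * ((ρAi i) ⊗ₖ ρB) * U) :
    ∀ i, crossEnt (Φi i) ρout = vnEntropy ρB + crossEnt (ρAi i) ρA := by
  obtain ⟨hU1, hU2⟩ := hU
  have hBpsd := hρB.1
  have hB : ρB.IsHermitian := hBpsd.1
  have hAiPSD : ∀ k, (ρAi k).PosSemidef := fun k => by
    rw [hρAi k]
    exact ptraceB_posSemidef ((outer_posSemidef (v k)).mul_mul_conjTranspose_same U)
  have hAsum : ρA = ∑ k, (p k : ℂ) • ρAi k := by
    rw [hρA, hρin]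
    have h1 : U * (∑ k, (p k : ℂ) • outer (v k)) * Uᴴ
        = ∑ k, (p k : ℂ) • (U * outer (v k) * Uᴴ) := by
      rw [Finset.mul_sum, Finset.sum_mul]
      exact Finset.sum_congr rfl fun k _ => by rw [Matrix.mul_smul, Matrix.smul_mul]
    rw [h1, ptraceB_sum_smul]
    exact Finset.sum_congr rfl fun k _ => by rw [hρAi k]
  have hAPSD : ρA.PosSemidef := by
    rw [hAsum]
    exact posSemidef_sum_smul_s7 p (fun k => le_of_lt (hp k)) ρAi hAiPSD
  have hA : ρA.IsHermitian := hAPSD.1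
  set VA : Matrix (Fin dA) (Fin dA) ℂ := ((hA.eigenvectorUnitary : Matrix.unitaryGroup (Fin dA) ℂ) : Matrix (Fin dA) (Fin dA) ℂ) with hVAdef
  set a : Fin dA → ℝ := hA.eigenvalues with hadef
  set VB : Matrix (Fin dB) (Fin dB) ℂ := ((hB.eigenvectorUnitary : Matrix.unitaryGroup (Fin dB) ℂ) : Matrix (Fin dB) (Fin dB) ℂ) with hVBdef
  set b : Fin dB → ℝ := hB.eigenvalues with hbdef
  have hVA1 : VA * VAᴴ = 1 := by
    rw [← Matrix.star_eq_conjTranspose]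
    exact Unitary.mul_star_self_of_mem hA.eigenvectorUnitary.2
  have hVA2 : VAᴴ * VA = 1 := by
    rw [← Matrix.star_eq_conjTranspose]
    exact Unitary.star_mul_self_of_mem hA.eigenvectorUnitary.2
  have hVB1 : VB * VBᴴ = 1 := by
    rw [← Matrix.star_eq_conjTranspose]
    exact Unitary.mul_star_self_of_mem hB.eigenvectorUnitary.2
  have hVB2 : VBᴴ * VB = 1 := by
    rw [← Matrix.star_eq_conjTranspose]
    exact Unitary.star_mul_self_of_mem hB.eigenvectorUnitary.2
  have hAdec : ρA = VA * Matrix.diagonal (fun i => ((a i : ℝ) : ℂ)) * VAᴴ := by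
    rw [← Matrix.star_eq_conjTranspose]
    exact hA.spectral_theorem
  have hBdec : ρB = VB * Matrix.diagonal (fun j => ((b j : ℝ) : ℂ)) * VBᴴ := by
    rw [← Matrix.star_eq_conjTranspose]
    exact hB.spectral_theorem
  have hAdiag : VAᴴ * ρA * VA = Matrix.diagonal (fun i => ((a i : ℝ) : ℂ)) := by
    rw [← Matrix.star_eq_conjTranspose]
    have h := hA.conjStarAlgAut_star_eigenvectorUnitary
    rw [Unitary.conjStarAlgAut_star_apply] at h
    exact h
  have hBdiag : VBᴴ * ρB * VB = Matrix.diagonal (fun j => ((b j : ℝ) : ℂ)) := by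
    rw [← Matrix.star_eq_conjTranspose]
    have h := hB.conjStarAlgAut_star_eigenvectorUnitary
    rw [Unitary.conjStarAlgAut_star_apply] at h
    exact h
  set V : Matrix (Fin dA × Fin dB) (Fin dA × Fin dB) ℂ := VA ⊗ₖ VB with hVdef
  have hV1 : V * Vᴴ = 1 := by
    rw [hVdef, kron_conjT, ← Matrix.mul_kronecker_mul, hVA1, hVB1, Matrix.one_kronecker_one]
  have hV2 : Vᴴ * V = 1 := by
    rw [hVdef, kron_conjT, ← Matrix.mul_kronecker_mul, hVA2, hVB2, Matrix.one_kronecker_one]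
  set d : Fin dA × Fin dB → ℝ := fun q => a q.1 * b q.2 with hddef
  have hkron : ρA ⊗ₖ ρB = V * Matrix.diagonal (fun q => ((d q : ℝ) : ℂ)) * Vᴴ := by
    conv_lhs => rw [hAdec, hBdec]
    rw [hVdef, kron_conjT, Matrix.mul_kronecker_mul, Matrix.mul_kronecker_mul,
      Matrix.diagonal_kronecker_diagonal]
    congr 2
    funext q
    rw [hddef]
    push_cast
    ring
  set W : Matrix (Fin dA × Fin dB) (Fin dA × Fin dB) ℂ := Uᴴ * V with hWdef
  have hW1 : W * Wᴴ = 1 := by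
    rw [hWdef, Matrix.conjTranspose_mul, Matrix.conjTranspose_conjTranspose]
    calc Uᴴ * V * (Vᴴ * U) = Uᴴ * (V * Vᴴ) * U := by simp only [Matrix.mul_assoc]
    _ = 1 := by rw [hV1, Matrix.mul_one, hU2]
  have hW2 : Wᴴ * W = 1 := by
    rw [hWdef, Matrix.conjTranspose_mul, Matrix.conjTranspose_conjTranspose]
    calc Vᴴ * U * (Uᴴ * V) = Vᴴ * (U * Uᴴ) * V := by simp only [Matrix.mul_assoc]
    _ = 1 := by rw [hU1, Matrix.mul_one, hV2]
  have houtdec : ρout = W * Matrix.diagonal (fun q => ((d q : ℝ) : ℂ)) * Wᴴ := by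
    rw [hρout, hkron, hWdef, Matrix.conjTranspose_mul, Matrix.conjTranspose_conjTranspose]
    simp only [Matrix.mul_assoc]
  have hdstar : (Matrix.diagonal (fun q => ((d q : ℝ) : ℂ)))ᴴ
      = Matrix.diagonal (fun q => ((d q : ℝ) : ℂ)) := by
    ext q q'
    by_cases h : q = q'
    · subst h
      simp [Matrix.conjTranspose_apply, Matrix.diagonal_apply_eq, Complex.conj_ofReal]
    · simp [Matrix.conjTranspose_apply, Matrix.diagonal_apply, h, Ne.symm h]
  have hout_herm : ρout.IsHermitian := by
    rw [houtdec]
    exact conj_herm W _ hdstar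
  have hlogout : matLog ρout = W * Matrix.diagonal (fun q => ((Real.log (d q) : ℝ) : ℂ)) * Wᴴ :=
    matFun_decomp hout_herm W hW1 hW2 d houtdec Real.log
  have hlogA : matLog ρA = VA * Matrix.diagonal (fun i => ((Real.log (a i) : ℝ) : ℂ)) * VAᴴ :=
    matFun_decomp hA VA hVA1 hVA2 a hAdec Real.log
  have hlogB : matLog ρB = VB * Matrix.diagonal (fun j => ((Real.log (b j) : ℝ) : ℂ)) * VBᴴ :=
    matFun_decomp hB VB hVB1 hVB2 b hBdec Real.log
  have haeig : ∀ j, 0 ≤ a j := fun j => hAPSD.eigenvalues_nonneg j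
  have hbeig : ∀ k, 0 ≤ b k := fun k => hBpsd.eigenvalues_nonneg k
  have htrB : ∑ k, ((b k : ℝ) : ℂ) = 1 := by
    calc ∑ k, ((b k : ℝ) : ℂ)
        = (Matrix.diagonal (fun j => ((b j : ℝ) : ℂ))).trace := (Matrix.trace_diagonal _).symm
      _ = ρB.trace := by rw [hBdec]; exact (trace_conj' VB _ hVB2).symm
      _ = 1 := hρB.2
  intro i
  set x : Fin dA → ℂ := fun j => (VAᴴ * ρAi i * VA) j j with hxdef
  have hxa : ∀ j, a j = 0 → x j = 0 := by
    intro j hj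
    have hconjsum : VAᴴ * ρA * VA = ∑ k, (p k : ℂ) • (VAᴴ * ρAi k * VA) := by
      conv_lhs => rw [hAsum]
      rw [Finset.mul_sum, Finset.sum_mul]
      exact Finset.sum_congr rfl fun k _ => by rw [Matrix.mul_smul, Matrix.smul_mul]
    have hentry : ((a j : ℝ) : ℂ) = ∑ k, (p k : ℂ) * ((VAᴴ * ρAi k * VA) j j) := by
      have := congrFun (congrFun hconjsum j) j
      rw [hAdiag] at this
      simpa [Matrix.diagonal_apply_eq, Matrix.sum_apply, Matrix.smul_apply] using this
    have h0 : ∑ k, (p k : ℂ) * ((VAᴴ * ρAi k * VA) j j) = 0 := by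
      rw [← hentry, hj, Complex.ofReal_zero]
    have hterms : ∀ k ∈ Finset.univ, (0:ℂ) ≤ (p k : ℂ) * ((VAᴴ * ρAi k * VA) j j) :=
      fun k _ => mul_nonneg (Complex.zero_le_real.mpr (le_of_lt (hp k)))
        (diag_nonneg' ((hAiPSD k).conjTranspose_mul_mul_same VA) j)
    have hz := (Finset.sum_eq_zero_iff_of_nonneg hterms).1 h0 i (Finset.mem_univ i)
    have hpne : (p i : ℂ) ≠ 0 := by
      simpa using (hp i).ne'
    exact (mul_eq_zero.1 hz).resolve_left hpne
  have hxnn : ∀ j, (0:ℂ) ≤ x j :=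
    fun j => diag_nonneg' ((hAiPSD i).conjTranspose_mul_mul_same VA) j
  have htrx : ∑ j, x j = 1 := by
    have h1 : ∑ j, x j = (VAᴴ * ρAi i * VA).trace := by
      simp [Matrix.trace, Matrix.diag, hxdef]
    rw [h1, trace_conj_s7 VA _ hVA1, hρAi i, trace_ptraceB, trace_conj' U _ hU2]
    calc (outer (v i)).trace = ∑ q, star (v i q) * v i q := by
          simp [outer, Matrix.trace, Matrix.diag, Matrix.vecMulVec_apply, mul_comm]
      _ = 1 := by simpa using hv i i
  have hmulconj : ∀ X Y : Matrix (Fin dA × Fin dB) (Fin dA × Fin dB) ℂ,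
      (Uᴴ * X * U) * (Uᴴ * Y * U) = Uᴴ * (X * Y) * U := by
    intro X Y
    calc (Uᴴ * X * U) * (Uᴴ * Y * U) = Uᴴ * X * (U * Uᴴ) * Y * U := by
          simp only [Matrix.mul_assoc]
      _ = Uᴴ * (X * Y) * U := by rw [hU1, Matrix.mul_one]; simp only [Matrix.mul_assoc]
  have hlogout' : matLog ρout
      = Uᴴ * (V * Matrix.diagonal (fun q => ((Real.log (d q) : ℝ) : ℂ)) * Vᴴ) * U := by
    rw [hlogout, hWdef, Matrix.conjTranspose_mul, Matrix.conjTranspose_conjTranspose]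
    simp only [Matrix.mul_assoc]
  have hVkron : Vᴴ * ((ρAi i) ⊗ₖ ρB) * V
      = (VAᴴ * ρAi i * VA) ⊗ₖ (Matrix.diagonal fun j => ((b j : ℝ) : ℂ)) := by
    rw [hVdef, kron_conjT, ← Matrix.mul_kronecker_mul, ← Matrix.mul_kronecker_mul, hBdiag]
  have htrace : (Φi i * matLog ρout).trace
      = ∑ q : Fin dA × Fin dB, x q.1 * ((b q.2 : ℝ) : ℂ) * ((Real.log (d q) : ℝ) : ℂ) := by
    rw [hΦi i, hlogout', hmulconj, trace_conj_s7 U _ hU1, trace_mul_conj_diag]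
    refine Finset.sum_congr rfl fun q _ => ?_
    rw [hVkron]
    rw [show ((VAᴴ * ρAi i * VA) ⊗ₖ (Matrix.diagonal fun j => ((b j : ℝ) : ℂ))) q q
        = (VAᴴ * ρAi i * VA) q.1 q.1 * (Matrix.diagonal fun j => ((b j : ℝ) : ℂ)) q.2 q.2 from
      rfl]
    rw [Matrix.diagonal_apply_eq]
  have hterm : ∀ (j : Fin dA) (k : Fin dB),
      x j * ((b k : ℝ) : ℂ) * ((Real.log (a j * b k) : ℝ) : ℂ)
      = x j * ((Real.log (a j) : ℝ) : ℂ) * ((b k : ℝ) : ℂ)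
        + x j * (((b k : ℝ) : ℂ) * ((Real.log (b k) : ℝ) : ℂ)) := by
    intro j k
    rcases eq_or_lt_of_le (haeig j) with h0 | hpos
    · rw [hxa j h0.symm]
      ring
    rcases eq_or_lt_of_le (hbeig k) with h0b | hposb
    · rw [← h0b]
      simp
    · rw [Real.log_mul hpos.ne' hposb.ne']
      push_cast
      ring
  have hsplit : (∑ q : Fin dA × Fin dB, x q.1 * ((b q.2 : ℝ) : ℂ) * ((Real.log (d q) : ℝ) : ℂ))
      = (∑ j, x j * ((Real.log (a j) : ℝ) : ℂ))
        + (∑ k, ((b k : ℝ) : ℂ) * ((Real.log (b k) : ℝ) : ℂ)) := by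
    rw [Fintype.sum_prod_type]
    calc ∑ j, ∑ k, x j * ((b k : ℝ) : ℂ) * ((Real.log (d (j, k)) : ℝ) : ℂ)
        = ∑ j, ∑ k, (x j * ((Real.log (a j) : ℝ) : ℂ) * ((b k : ℝ) : ℂ)
            + x j * (((b k : ℝ) : ℂ) * ((Real.log (b k) : ℝ) : ℂ))) :=
          Finset.sum_congr rfl fun j _ => Finset.sum_congr rfl fun k _ => hterm j k
      _ = ∑ j, (x j * ((Real.log (a j) : ℝ) : ℂ) * (∑ k, ((b k : ℝ) : ℂ))
            + x j * (∑ k, ((b k : ℝ) : ℂ) * ((Real.log (b k) : ℝ) : ℂ))) := by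
          refine Finset.sum_congr rfl fun j _ => ?_
          rw [Finset.sum_add_distrib, ← Finset.mul_sum, ← Finset.mul_sum]
      _ = ∑ j, (x j * ((Real.log (a j) : ℝ) : ℂ)
            + x j * (∑ k, ((b k : ℝ) : ℂ) * ((Real.log (b k) : ℝ) : ℂ))) := by
          rw [htrB]
          simp only [mul_one]
      _ = (∑ j, x j * ((Real.log (a j) : ℝ) : ℂ))
            + (∑ j, x j) * (∑ k, ((b k : ℝ) : ℂ) * ((Real.log (b k) : ℝ) : ℂ)) := by
          rw [Finset.sum_add_distrib, ← Finset.sum_mul]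
      _ = _ := by rw [htrx, one_mul]
  have hcrossA : crossEnt (ρAi i) ρA = -(∑ j, x j * ((Real.log (a j) : ℝ) : ℂ)).re := by
    rw [crossEnt, hlogA, trace_mul_conj_diag]
  have hvnB : vnEntropy ρB
      = -(∑ k, ((b k : ℝ) : ℂ) * ((Real.log (b k) : ℝ) : ℂ)).re := by
    rw [vnEntropy, crossEnt, hlogB, trace_mul_conj_diag]
    congr 2
    refine Finset.sum_congr rfl fun k _ => ?_
    rw [hBdiag, Matrix.diagonal_apply_eq]
  rw [crossEnt, htrace, hsplit, Complex.add_re, hcrossA, hvnB]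
  ring

end QCE
end
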